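/- Let γ > 0 be a real number and let h ≥ 1 be an integer. Define a₀ = 0 and a_j = 1/(1 + 4γ(j−1)) for integers j ≥ 1. Let Adj be the adjacency matrix of the complete graph on h+1 vertices (the (h+1)×(h+1) matrix with 0 on the diagonal and 1 in every off-diagonal entry), and let M = −(h−1)·(a_{h−1} − a_h)·Adj + 4·γ·a_h²·Adj². Then every eigenvalue λ of M satisfies |λ| ≤ 4γh; that is, the spectral radius of M is at most 4γh. -/

import Mathlib

open Matrix Polynomial

set_option maxHeartbeats 1600000 in
theorem stmt_8 (γ : ℝ) (hγ : 0 < γ) (h : ℕ) (hh : 1 ≤ h)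
    (a : ℕ → ℝ) (ha0 : a 0 = 0)
    (ha : ∀ j : ℕ, 1 ≤ j → a j = 1 / (1 + 4 * γ * ((j : ℝ) - 1)))
    (Adj : Matrix (Fin (h + 1)) (Fin (h + 1)) ℝ)
    (hAdj : ∀ i j, Adj i j = if i = j then 0 else 1)
    (M : Matrix (Fin (h + 1)) (Fin (h + 1)) ℝ)
    (hM : M = (-(((h : ℝ) - 1) * (a (h - 1) - a h))) • Adj
      + (4 * γ * (a h) ^ 2) • (Adj * Adj)) :
    ∀ μ ∈ spectrum ℝ M, |μ| ≤ 4 * γ * h := by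
  intro μ hμ
  obtain ⟨J, hA, hJJ⟩ : ∃ J : Matrix (Fin (h + 1)) (Fin (h + 1)) ℝ,
      Adj = J - 1 ∧ J * J = ((h:ℝ) + 1) • J := by
    refine ⟨Matrix.of (fun _ _ => (1:ℝ)), ?_, ?_⟩
    · ext i j
      by_cases hij : i = j <;> simp [hAdj, Matrix.one_apply, hij]
    · ext i j
      simp [Matrix.mul_apply, Finset.sum_const, Finset.card_univ]
  have hne : Adj * Adj = ((h:ℝ) - 1) • Adj + (h:ℝ) • (1 : Matrix (Fin (h+1)) (Fin (h+1)) ℝ) := by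
    rw [hA]
    rw [sub_mul, mul_sub, mul_sub, hJJ, Matrix.one_mul, Matrix.mul_one]
    rw [mul_one]
    module
  set c₁ : ℝ := -(((h : ℝ) - 1) * (a (h - 1) - a h)) with hc₁
  set c₂ : ℝ := 4 * γ * (a h) ^ 2 with hc₂
  set p : ℝ := c₁ + c₂ * ((h:ℝ) - 1) with hp
  set q : ℝ := c₂ * (h:ℝ) with hq0
  set av : ℝ := q - p with hav
  set bv : ℝ := q + p * (h:ℝ) with hbv
  have hM' : M = p • Adj + q • (1 : Matrix (Fin (h+1)) (Fin (h+1)) ℝ) := by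
    rw [hM, hne, hp, hq0]
    module
  have e1 : M - av • (1 : Matrix (Fin (h+1)) (Fin (h+1)) ℝ) = p • (Adj + 1) := by
    rw [hM', hav]; module
  have e2 : M - bv • (1 : Matrix (Fin (h+1)) (Fin (h+1)) ℝ) = p • (Adj - (h:ℝ) • 1) := by
    rw [hM', hbv]; module
  have key : (Adj + 1) * (Adj - (h:ℝ) • (1 : Matrix (Fin (h+1)) (Fin (h+1)) ℝ)) = 0 := by
    rw [add_mul, mul_sub, mul_sub, hne]
    simp only [Matrix.one_mul, Matrix.mul_smul, Matrix.mul_one]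
    module
  have hqz : (M - av • (1 : Matrix (Fin (h+1)) (Fin (h+1)) ℝ)) * (M - bv • 1) = 0 := by
    rw [e1, e2, smul_mul_smul_comm, key, smul_zero]
  -- polynomial spectral mapping
  have hPM : Polynomial.aeval M ((X - C av) * (X - C bv)) = 0 := by
    rw [_root_.map_mul]
    simpa [Algebra.algebraMap_eq_smul_one] using hqz
  have hmem : (μ - av) * (μ - bv) ∈ spectrum ℝ
      (Polynomial.aeval M ((X - C av) * (X - C bv))) := by
    apply spectrum.subset_polynomial_aeval M ((X - C av) * (X - C bv))
    exact ⟨μ, hμ, by simp⟩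
  rw [hPM, spectrum.zero_eq] at hmem
  have hcases : μ = av ∨ μ = bv := by
    rcases mul_eq_zero.mp hmem with h1 | h1
    · exact Or.inl (sub_eq_zero.mp h1)
    · exact Or.inr (sub_eq_zero.mp h1)
  clear_value bv av q p c₂ c₁
  clear hM hM' e1 e2 key hqz hPM hmem hμ hne hA hJJ hAdj
  have hbound : |av| ≤ 4 * γ * h ∧ |bv| ≤ 4 * γ * h := by
    rcases eq_or_lt_of_le hh with h1 | h2
    · -- h = 1
      obtain rfl : h = 1 := h1.symm
      have hA1 : a 1 = 1 := by rw [ha 1 le_rfl]; norm_num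
      have hav1 : av = 4 * γ := by
        rw [hav, hq0, hp, hc₁, hc₂]; simp [ha0, hA1]
      have hbb : bv = 4 * γ := by
        rw [hbv, hq0, hp, hc₁, hc₂]; simp [ha0, hA1]
      rw [hav1, hbb, abs_of_pos (by linarith : (0:ℝ) < 4*γ)]
      norm_num
    · -- 2 ≤ h
      have h2' : 2 ≤ h := h2
      have hcast : (2:ℝ) ≤ (h:ℝ) := by exact_mod_cast h2'
      set d : ℝ := 1 + 4*γ*((h:ℝ) - 1) with hdd
      set e : ℝ := 1 + 4*γ*((h:ℝ) - 2) with hee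
      have hd1 : 1 ≤ d := by rw [hdd]; nlinarith
      have he1 : 1 ≤ e := by rw [hee]; nlinarith
      have hd0 : (0:ℝ) < d := by linarith
      have he0 : (0:ℝ) < e := by linarith
      have hah : a h = 1/d := ha h hh
      have hah1 : a (h-1) = 1/e := by
        rw [ha (h-1) (by omega), hee]
        congr 1
        push_cast [Nat.cast_sub hh]
        ring
      clear_value d e
      have hed2 : (0:ℝ) < e * d^2 := by positivity
      have hγ4 : (0:ℝ) ≤ 4*γ := by linarith
      have hh1 : (0:ℝ) ≤ (h:ℝ) - 1 := by linarith
      have hh0 : (0:ℝ) < (h:ℝ) := by linarith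
      have havm : av * (e * d^2) = 4*γ*e + ((h:ℝ)-1)*(4*γ)*d := by
        rw [hav, hq0, hp, hc₁, hc₂, hah, hah1]
        field_simp
        rw [hdd, hee]
        ring
      have hbvm : bv * (e * d^2) = 4*γ*(h:ℝ)*(1 - 4*γ) := by
        rw [hbv, hq0, hp, hc₁, hc₂, hah, hah1]
        field_simp
        rw [hdd, hee]
        ring
      have hedd : 1 ≤ e * d := by nlinarith
      have hed1 : 1 ≤ e * d^2 := by nlinarith
      have hdg : 1 + 4*γ ≤ d := by
        rw [hdd]
        nlinarith [mul_nonneg hγ.le (by linarith : (0:ℝ) ≤ (h:ℝ) - 2)]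
      have hedd2 : d ≤ e * d^2 := by nlinarith
      constructor
      · rw [abs_le]
        constructor
        · rw [← mul_le_mul_iff_of_pos_right hed2, havm]
          have f0 : 0 ≤ 4*γ*(h:ℝ)*(e*d^2) := by
            apply mul_nonneg (mul_nonneg hγ4 hh0.le) hed2.le
          have f1 : 0 ≤ 4*γ*e := mul_nonneg hγ4 he0.le
          have f2 : 0 ≤ ((h:ℝ)-1)*(4*γ)*d := mul_nonneg (mul_nonneg hh1 hγ4) hd0.le
          nlinarith [f0, f1, f2]
        · rw [← mul_le_mul_iff_of_pos_right hed2, havm]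
          have f1 : 0 ≤ 4*γ*e*(d^2 - 1) := by
            apply mul_nonneg (mul_nonneg hγ4 he0.le); nlinarith
          have f2 : 0 ≤ 4*γ*((h:ℝ)-1)*d*(e*d - 1) := by
            apply mul_nonneg (mul_nonneg (mul_nonneg hγ4 hh1) hd0.le); linarith
          nlinarith [f1, f2]
      · rw [abs_le]
        constructor
        · rw [← mul_le_mul_iff_of_pos_right hed2, hbvm]
          have g4 : 0 ≤ 4*γ*(h:ℝ)*(e*d^2 + 1 - 4*γ) := by
            apply mul_nonneg (mul_nonneg hγ4 hh0.le); linarith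
          nlinarith [g4]
        · rw [← mul_le_mul_iff_of_pos_right hed2, hbvm]
          have g5 : 0 ≤ 4*γ*(h:ℝ)*(e*d^2 - 1 + 4*γ) := by
            apply mul_nonneg (mul_nonneg hγ4 hh0.le); linarith
          nlinarith [g5]
  rcases hcases with rfl | rfl
  · exact hbound.1
  · exact hbound.2
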